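/- arXiv:2402.14847 — 2 statements merged into one kernel-verified Lean document; each statement's English description precedes it below -/
import Mathlib

section
/- Lower bound via splitting: for any position k of a designated job l in an optimal schedule, the optimal total tardiness of J equals the optimal total tardiness of the set of jobs preceding l, plus max(0, Σ_{j preceding} p_j + p_l − d_l), plus the optimal total tardiness (with start time shifted by Σ_{j preceding} p_j + p_l) of the jobs following l, where the minimum is taken over the sets of preceding jobs of size k−1; in particular the optimal objective is at most this quantity for every choice of the partition. -/
/-- Total tardiness of a list of jobs processed consecutively (no idle time)
starting at time `t`. -/
def totalTardFrom {n : ℕ} (p d : Fin n → ℤ) : ℤ → List (Fin n) → ℤ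
  | _, [] => 0
  | t, j :: L => max 0 (t + p j - d j) + totalTardFrom p d (t + p j) L

/-- Optimal total tardiness of the job set `A` when processing starts at
time `t` (minimum over all orderings of `A`). -/
noncomputable def optTard {n : ℕ} (p d : Fin n → ℤ) (A : Finset (Fin n)) (t : ℤ) : ℤ :=
  sInf {x : ℤ | ∃ L : List (Fin n), L.Nodup ∧ L.toFinset = A ∧ totalTardFrom p d t L = x}

lemma totalTardFrom_nonneg {n : ℕ} (p d : Fin n → ℤ) (t : ℤ) (L : List (Fin n)) :
    0 ≤ totalTardFrom p d t L := by
  induction L generalizing t with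
  | nil => simp [totalTardFrom]
  | cons j L ih =>
    have := ih (t + p j)
    have h : (0:ℤ) ≤ max 0 (t + p j - d j) := le_max_left _ _
    simp only [totalTardFrom]
    omega

lemma totalTardFrom_append {n : ℕ} (p d : Fin n → ℤ) (t : ℤ) (L1 L2 : List (Fin n)) :
    totalTardFrom p d t (L1 ++ L2)
      = totalTardFrom p d t L1 + totalTardFrom p d (t + (L1.map p).sum) L2 := by
  induction L1 generalizing t with
  | nil => simp [totalTardFrom]
  | cons j L1 ih =>
    simp only [List.cons_append, List.append_eq, totalTardFrom, List.map_cons, List.sum_cons]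
    rw [ih]
    ring

lemma optTard_nonempty {n : ℕ} (p d : Fin n → ℤ) (A : Finset (Fin n)) (t : ℤ) :
    {x : ℤ | ∃ L : List (Fin n), L.Nodup ∧ L.toFinset = A ∧ totalTardFrom p d t L = x}.Nonempty :=
  ⟨_, A.toList, A.nodup_toList, A.toList_toFinset, rfl⟩

lemma optTard_bddBelow {n : ℕ} (p d : Fin n → ℤ) (A : Finset (Fin n)) (t : ℤ) :
    BddBelow {x : ℤ | ∃ L : List (Fin n), L.Nodup ∧ L.toFinset = A ∧ totalTardFrom p d t L = x} := by
  refine ⟨0, ?_⟩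
  rintro x ⟨L, _, _, rfl⟩
  exact totalTardFrom_nonneg p d t L

/-- Lower bound via splitting: for any job `l` and any partition of
the remaining jobs into a set `A` scheduled before `l` and a set `B` scheduled
after `l`, the optimal total tardiness of all jobs is at most the optimal
tardiness of `A` started at 0, plus the tardiness of `l` completing at
`t_A + p l`, plus the optimal tardiness of `B` started at `t_A + p l`,
where `t_A = ∑_{j ∈ A} p j`. -/
theorem optTard_le_split (n : ℕ) (p d : Fin n → ℤ)
    (hp : ∀ j, 0 < p j) (hd : ∀ j, 0 ≤ d j)
    (l : Fin n) (A B : Finset (Fin n))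
    (hdisj : Disjoint A B) (hpart : A ∪ B = Finset.univ \ {l}) :
    optTard p d Finset.univ 0
      ≤ optTard p d A 0 + max 0 ((∑ j ∈ A, p j) + p l - d l)
          + optTard p d B ((∑ j ∈ A, p j) + p l) := by
  obtain ⟨LA, hLA1, hLA2, hLA3⟩ := Int.csInf_mem (optTard_nonempty p d A 0) (optTard_bddBelow p d A 0)
  obtain ⟨LB, hLB1, hLB2, hLB3⟩ := Int.csInf_mem (optTard_nonempty p d B ((∑ j ∈ A, p j) + p l))
    (optTard_bddBelow p d B ((∑ j ∈ A, p j) + p l))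
  have hlA : l ∉ A := by
    intro h
    have : l ∈ A ∪ B := Finset.mem_union_left _ h
    rw [hpart] at this; simp at this
  have hlB : l ∉ B := by
    intro h
    have : l ∈ A ∪ B := Finset.mem_union_right _ h
    rw [hpart] at this; simp at this
  set L : List (Fin n) := LA ++ l :: LB with hL
  have hsum : (LA.map p).sum = ∑ j ∈ A, p j := by
    rw [← hLA2]
    exact (List.sum_toFinset p hLA1).symm ▸ (List.sum_toFinset p hLA1)
  have hnodup : L.Nodup := by
    rw [hL, List.nodup_append]
    refine ⟨hLA1, ?_, ?_⟩
    · rw [List.nodup_cons]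
      refine ⟨by simpa [← hLB2, List.mem_toFinset] using hlB, hLB1⟩
    · intro a ha b hb hab; subst hab
      have haA : a ∈ A := by rw [← hLA2]; exact List.mem_toFinset.mpr ha
      rcases List.mem_cons.mp hb with rfl | hb'
      · exact hlA haA
      · have haB : a ∈ B := by rw [← hLB2]; exact List.mem_toFinset.mpr hb'
        exact (Finset.disjoint_left.mp hdisj haA) haB
  have htofin : L.toFinset = Finset.univ := by
    rw [hL]
    simp only [List.toFinset_append, List.toFinset_cons, hLA2, hLB2]
    ext x
    simp only [Finset.mem_union, Finset.mem_insert, Finset.mem_univ, iff_true]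
    by_cases hx : x = l
    · right; left; exact hx
    · have : x ∈ A ∪ B := by
        rw [hpart]; simp [hx]
      rcases Finset.mem_union.mp this with h | h
      · left; exact h
      · right; right; exact h
  have hval : totalTardFrom p d 0 L
      = optTard p d A 0 + max 0 ((∑ j ∈ A, p j) + p l - d l)
          + optTard p d B ((∑ j ∈ A, p j) + p l) := by
    rw [hL, totalTardFrom_append, hsum]
    simp only [totalTardFrom, zero_add]
    rw [hLA3, hLB3]
    unfold optTard
    ring
  have hmem : optTard p d A 0 + max 0 ((∑ j ∈ A, p j) + p l - d l)
          + optTard p d B ((∑ j ∈ A, p j) + p l)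
      ∈ {x : ℤ | ∃ L : List (Fin n), L.Nodup ∧ L.toFinset = Finset.univ ∧
          totalTardFrom p d 0 L = x} := ⟨L, hnodup, htofin, hval⟩
  exact csInf_le (optTard_bddBelow p d Finset.univ 0) hmem
end

section
/- Lawler's decomposition theorem: if jobs are indexed in EDD order and l is a job of maximal processing time, then there exists an integer k with l ≤ k ≤ n and an optimal sequence in which l is preceded exactly by all jobs j with j ≤ k (j ≠ l) and followed by all jobs j with j > k. -/
/-- Total tardiness of permutation `π` (job at position `k` is `π k`, no idle
time, start at 0). -/
def totalTard {n : ℕ} (p d : Fin n → ℤ) (π : Equiv.Perm (Fin n)) : ℤ :=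
  ∑ k : Fin n,
    max 0 ((∑ k' ∈ Finset.univ.filter (fun k' => k' ≤ k), p (π k')) - d (π k))

namespace LawlerAux

variable {n : ℕ} (p d : Fin n → ℤ)

/-- Tardiness of a list of jobs started at time `t`. -/
def tardFrom (t : ℤ) : List (Fin n) → ℤ
  | [] => 0
  | a :: L => max 0 (t + p a - d a) + tardFrom (t + p a) L

/-- Total processing time of a list of jobs. -/
def sumP (L : List (Fin n)) : ℤ := (L.map p).sum

@[simp] lemma sumP_nil : sumP p ([] : List (Fin n)) = 0 := rfl
@[simp] lemma sumP_cons (a : Fin n) (L : List (Fin n)) :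
    sumP p (a :: L) = p a + sumP p L := by simp [sumP]
@[simp] lemma sumP_append (A B : List (Fin n)) :
    sumP p (A ++ B) = sumP p A + sumP p B := by simp [sumP]

lemma sumP_nonneg (hp : ∀ j, 0 < p j) (L : List (Fin n)) : 0 ≤ sumP p L := by
  induction L with
  | nil => simp
  | cons a L ih => have := hp a; simp; omega

@[simp] lemma tardFrom_nil (t : ℤ) : tardFrom p d t ([] : List (Fin n)) = 0 := rfl
@[simp] lemma tardFrom_cons (t : ℤ) (a : Fin n) (L : List (Fin n)) :
    tardFrom p d t (a :: L) = max 0 (t + p a - d a) + tardFrom p d (t + p a) L := rfl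

lemma tardFrom_append (t : ℤ) (A B : List (Fin n)) :
    tardFrom p d t (A ++ B) = tardFrom p d t A + tardFrom p d (t + sumP p A) B := by
  induction A generalizing t with
  | nil => simp
  | cons a A ih => simp [ih, add_assoc]

lemma tardFrom_mono {t t' : ℤ} (h : t ≤ t') (L : List (Fin n)) :
    tardFrom p d t L ≤ tardFrom p d t' L := by
  induction L generalizing t t' with
  | nil => simp
  | cons a L ih =>
    simp only [tardFrom_cons]
    exact add_le_add (max_le_max le_rfl (by omega)) (ih (by omega))

lemma tardFrom_ofFn (m : ℕ) (f : Fin m → Fin n) (t : ℤ) :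
    tardFrom p d t (List.ofFn f) =
      ∑ k : Fin m,
        max 0 (t + (∑ k' ∈ Finset.univ.filter (fun k' => k' ≤ k), p (f k')) - d (f k)) := by
  induction m generalizing t with
  | zero => simp
  | succ m ih =>
    rw [List.ofFn_succ, tardFrom_cons, ih, Fin.sum_univ_succ]
    congr 1
    · congr 1
      have : (Finset.univ.filter (fun k' => k' ≤ (0 : Fin (m+1)))) = {0} := by
        ext x; simp [Fin.le_zero_iff]
      rw [this]
      simp
    · apply Finset.sum_congr rfl
      intro k _
      congr 2
      rw [Finset.sum_filter, Finset.sum_filter, Fin.sum_univ_succ]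
      simp [Fin.succ_le_succ_iff, Fin.zero_le, add_assoc]

lemma totalTard_eq (π : Equiv.Perm (Fin n)) :
    totalTard p d π = tardFrom p d 0 (List.ofFn π) := by
  rw [tardFrom_ofFn]
  simp [totalTard]

lemma exists_perm_ofFn (L : List (Fin n)) (h1 : L.length = n) (h2 : L.Nodup) :
    ∃ π : Equiv.Perm (Fin n), List.ofFn π = L := by
  have hinj : Function.Injective (fun k : Fin n => L.get (Fin.cast h1.symm k)) := by
    intro a b hab
    have := (List.nodup_iff_injective_get.mp h2) hab
    simpa [Fin.ext_iff] using this
  have hbij := Finite.injective_iff_bijective.mp hinj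
  refine ⟨Equiv.ofBijective _ hbij, ?_⟩
  apply List.ext_getElem
  · simp [h1]
  · intro i hi hi'
    simp only [List.getElem_ofFn, Equiv.ofBijective_apply]
    rfl

lemma mem_of_valid (L : List (Fin n)) (h1 : L.length = n) (h2 : L.Nodup) (x : Fin n) :
    x ∈ L := by
  have : L.toFinset = Finset.univ := by
    apply Finset.eq_univ_of_card
    rw [List.toFinset_card_of_nodup h2, h1, Fintype.card_fin]
  rw [← List.mem_toFinset, this]
  exact Finset.mem_univ x

/-- Key arithmetic inequality for swapping job `l` (processing time `pl`,
due date `dl`, completing at `t + pl`) with a later job `j`. -/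
lemma key_swap (t S pl pj dl dj : ℤ) (hS : 0 ≤ S) (hpj : 0 < pj) (hpl : pj ≤ pl)
    (hd : dj = dl ∨ dj < max (t + pl) dl) :
    max 0 (t + pj - dj) + max 0 (t + pj + S + pl - dl) ≤
      max 0 (t + pl - dl) + max 0 (t + pl + S + pj - dj) := by
  rcases hd with h | h <;>
  · simp only [max_def] at *
    split_ifs at * <;> omega

/-- Swapping `l` with a later job `j` does not increase total tardiness,
provided `p j ≤ p l` and `d j` is small enough (or equal to `d l`). -/
lemma swap_le (hp : ∀ i, 0 < p i) (l j : Fin n) (A B C2 : List (Fin n))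
    (hpj : p j ≤ p l)
    (hd : d j = d l ∨ d j < max (sumP p A + p l) (d l)) :
    tardFrom p d 0 (A ++ j :: (B ++ l :: C2)) ≤
      tardFrom p d 0 (A ++ l :: (B ++ j :: C2)) := by
  have hS := sumP_nonneg p hp B
  have h1 := key_swap (0 + sumP p A) (sumP p B) (p l) (p j) (d l) (d j) hS (hp j) hpj
    (by rwa [zero_add])
  have h2 : tardFrom p d (0 + sumP p A + p j) B ≤ tardFrom p d (0 + sumP p A + p l) B :=
    tardFrom_mono p d (by omega) B
  have h3 : tardFrom p d (0 + sumP p A + p j + sumP p B + p l) C2 =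
      tardFrom p d (0 + sumP p A + p l + sumP p B + p j) C2 := by
    congr 1; ring
  simp only [tardFrom_append, tardFrom_cons]
  linarith

/-- Moving an early job `i` from before `l` to immediately after `l` does not
increase total tardiness, provided `i` is still early at its new position. -/
lemma move_le (hp : ∀ i, 0 < p i) (l i : Fin n) (A1 A2 C : List (Fin n))
    (hdi : sumP p A1 + p i + sumP p A2 + p l ≤ d i) :
    tardFrom p d 0 ((A1 ++ A2) ++ l :: i :: C) ≤
      tardFrom p d 0 (A1 ++ i :: (A2 ++ l :: C)) := by
  have h2 : tardFrom p d (0 + sumP p A1) A2 ≤ tardFrom p d (0 + sumP p A1 + p i) A2 :=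
    tardFrom_mono p d (by have := hp i; omega) A2
  have h3 : tardFrom p d (0 + (sumP p A1 + sumP p A2) + p l + p i) C =
      tardFrom p d (0 + sumP p A1 + p i + sumP p A2 + p l) C := by
    congr 1; ring
  have h4 : max 0 (0 + (sumP p A1 + sumP p A2) + p l - d l) ≤
      max 0 (0 + sumP p A1 + p i + sumP p A2 + p l - d l) := by
    have := hp i; apply max_le_max le_rfl; omega
  have h5 : max 0 (0 + (sumP p A1 + sumP p A2) + p l + p i - d i) = 0 := by
    apply max_eq_left; omega
  have h6 : (0:ℤ) ≤ max 0 (0 + sumP p A1 + p i - d i) := le_max_left _ _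
  simp only [tardFrom_append, tardFrom_cons, sumP_append]
  linarith

lemma getElem_mid (P Q : List (Fin n)) (a : Fin n) (h : P.length < (P ++ a :: Q).length) :
    (P ++ a :: Q)[P.length] = a := by
  rw [List.getElem_append_right le_rfl]
  simp

lemma perm_apply (π : Equiv.Perm (Fin n)) (L : List (Fin n)) (h : List.ofFn ⇑π = L)
    (m : Fin n) (hm : (m : ℕ) < L.length) : π m = L[(m : ℕ)] := by
  subst h
  rw [List.getElem_ofFn]

/-- The downward induction: if all jobs after `l` have large due dates, we can
repeatedly move "misplaced" early jobs to just after `l` and eventually obtain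
an optimal schedule with the required prefix structure. -/
lemma step2 (hp : ∀ j, 0 < p j) (hEDD : Monotone d) (l : Fin n)
    (T tstar : ℤ) (hT : ∀ σ : Equiv.Perm (Fin n), T ≤ totalTard p d σ)
    (u : ℕ) :
    ∀ A C : List (Fin n),
      A.length = u →
      (A ++ l :: C).length = n → (A ++ l :: C).Nodup →
      tardFrom p d 0 (A ++ l :: C) ≤ T →
      (∀ j ∈ C, d l < d j ∧ tstar ≤ d j) →
      sumP p A + p l ≤ tstar →
      ∃ k : Fin n, l ≤ k ∧ ∃ π' : Equiv.Perm (Fin n),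
        (∀ σ : Equiv.Perm (Fin n), totalTard p d π' ≤ totalTard p d σ) ∧ π' k = l ∧
        (∀ m : Fin n, m ≤ k ↔ π' m ≤ k) := by
  induction u using Nat.strong_induction_on with
  | _ u IH =>
  intro A C hAu hlen hnd htard hC hsum
  subst hAu
  by_cases hv : ∃ i ∈ A, ∃ j ∈ C, j < i
  · -- there is a misplaced pair: move `i` to just after `l`
    obtain ⟨i, hiA, j, hjC, hji⟩ := hv
    obtain ⟨A1, A2, hA⟩ := List.append_of_mem hiA
    have hold : A ++ l :: C = A1 ++ i :: (A2 ++ l :: C) := by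
      rw [hA]; simp
    have hperm : ((A1 ++ A2) ++ l :: i :: C).Perm (A ++ l :: C) := by
      rw [hold, List.append_assoc]
      apply List.Perm.append_left
      have h1 : A2 ++ l :: i :: C = (A2 ++ [l]) ++ i :: C := by simp
      have h2 : (((A2 ++ [l]) ++ i :: C) : List (Fin n)).Perm (i :: ((A2 ++ [l]) ++ C)) :=
        List.perm_middle
      rw [h1]
      refine h2.trans ?_
      apply List.Perm.cons
      have h3 : (A2 ++ [l]) ++ C = A2 ++ l :: C := by simp
      rw [h3]
    have hdj := hC j hjC
    have hdi_ge : d j ≤ d i := hEDD (le_of_lt hji)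
    have hsumA : sumP p A = sumP p A1 + p i + sumP p A2 := by
      rw [hA, sumP_append, sumP_cons]; ring
    have hmove : tardFrom p d 0 ((A1 ++ A2) ++ l :: i :: C) ≤
        tardFrom p d 0 (A ++ l :: C) := by
      rw [hold]
      apply move_le p d hp l i A1 A2 C
      linarith [hdj.2]
    have hA1A2 : (A1 ++ A2).length < A.length := by
      have h8 : A.length = A1.length + 1 + A2.length := by
        rw [hA]; simp only [List.length_append, List.length_cons]; omega
      simp only [List.length_append]; omega
    refine IH ((A1 ++ A2).length) hA1A2 (A1 ++ A2) (i :: C) rfl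
      (hperm.length_eq.trans hlen) (hperm.nodup_iff.mpr hnd)
      (le_trans hmove htard) ?_ ?_
    · intro j' hj'
      rcases List.mem_cons.mp hj' with rfl | hj'
      · exact ⟨lt_of_lt_of_le hdj.1 hdi_ge, le_trans hdj.2 hdi_ge⟩
      · exact hC j' hj'
    · have h9 : sumP p (A1 ++ A2) = sumP p A - p i := by
        rw [sumP_append, hsumA]; ring
      have := hp i
      linarith
  · -- no misplaced pair: the schedule has the required structure
    push_neg at hv
    have hndfull := hnd
    rw [List.nodup_append, List.nodup_cons] at hnd
    obtain ⟨hndA, ⟨hlC, hndC⟩, hdisj⟩ := hnd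
    have hn : A.length + (C.length + 1) = n := by
      have h7 := hlen
      simp only [List.length_append, List.length_cons] at h7
      omega
    have hkn : A.length < n := by omega
    set k : Fin n := ⟨A.length, hkn⟩ with hk
    obtain ⟨π, hπ⟩ := exists_perm_ofFn (A ++ l :: C) hlen hndfull
    have hkval : (k : ℕ) = A.length := rfl
    have hL2 : A ++ l :: C = (A ++ [l]) ++ C := by simp
    have hAl : (A ++ [l]).length = A.length + 1 := by simp
    have hπk : π k = l := by
      rw [perm_apply π _ hπ k (by rw [hlen]; exact k.is_lt)]
      exact getElem_mid A C l (by simp)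
    have hndAl : (A ++ [l]).Nodup := by
      rw [List.nodup_append]
      refine ⟨hndA, List.nodup_singleton l, ?_⟩
      intro a ha b hb
      rw [List.mem_singleton] at hb
      subst hb
      exact hdisj a ha _ (by simp)
    set S : Finset (Fin n) := (A ++ [l]).toFinset with hSdef
    have hmemS : ∀ x : Fin n, x ∈ S ↔ (x ∈ A ∨ x = l) := by
      intro x; simp [hSdef]; exact Or.comm
    have hltSC : ∀ a : Fin n, (a ∈ A ∨ a = l) → ∀ b ∈ C, a < b := by
      intro a ha b hb
      rcases ha with ha | rfl
      · have h1 : a ≤ b := hv a ha b hb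
        have h2 : a ≠ b := by
          intro h; subst h
          exact hdisj _ ha _ (List.mem_cons_of_mem _ hb) rfl
        exact lt_of_le_of_ne h1 h2
      · by_contra hba
        push_neg at hba
        exact absurd (hC b hb).1 (not_lt.mpr (hEDD hba))
    have hnotS : ∀ b ∈ C, b ∉ S := by
      intro b hb hbS
      rcases (hmemS b).mp hbS with h | rfl
      · exact hdisj _ h _ (List.mem_cons_of_mem _ hb) rfl
      · exact hlC hb
    have hbC : ∀ b : Fin n, b ∉ S → b ∈ C := by
      intro b hb
      have hbL := mem_of_valid (A ++ l :: C) hlen hndfull b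
      rw [List.mem_append, List.mem_cons] at hbL
      rcases hbL with h | h | h
      · exact absurd ((hmemS b).mpr (Or.inl h)) hb
      · exact absurd ((hmemS b).mpr (Or.inr h)) hb
      · exact h
    have hScard : S.card = A.length + 1 := by
      rw [hSdef, List.toFinset_card_of_nodup hndAl, hAl]
    have hsub : Finset.Iic k ⊆ S := by
      intro x hx
      by_contra hxS
      have hxC : x ∈ C := hbC x hxS
      have hSsub : S ⊆ Finset.Iio x := by
        intro a ha
        exact Finset.mem_Iio.mpr (hltSC a ((hmemS a).mp ha) x hxC)
      have h1 := Finset.card_le_card hSsub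
      rw [hScard, Fin.card_Iio] at h1
      have hxk : (x : ℕ) ≤ (k : ℕ) := Fin.le_def.mp (Finset.mem_Iic.mp hx)
      omega
    have hSeq : Finset.Iic k = S := by
      apply Finset.eq_of_subset_of_card_le hsub
      rw [hScard, Fin.card_Iic]
    have hlk : l ≤ k := by
      have : l ∈ Finset.Iic k := by
        rw [hSeq]; exact (hmemS l).mpr (Or.inr rfl)
      exact Finset.mem_Iic.mp this
    refine ⟨k, hlk, π, ?_, hπk, ?_⟩
    · intro σ
      rw [totalTard_eq, hπ]
      exact le_trans htard (hT σ)
    · intro m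
      constructor
      · intro hm
        have hmk : (m : ℕ) ≤ (k : ℕ) := Fin.le_def.mp hm
        have hmu : (m : ℕ) < (A ++ [l]).length := by rw [hAl]; omega
        have hπm := perm_apply π _ hπ m (by rw [hlen]; exact m.is_lt)
        have hmem : π m ∈ A ++ [l] := by
          rw [hπm, List.getElem_of_eq hL2, List.getElem_append_left hmu]
          exact List.getElem_mem _
        have : π m ∈ Finset.Iic k := by
          rw [hSeq, hSdef, List.mem_toFinset]; exact hmem
        exact Finset.mem_Iic.mp this
      · intro hπmk
        by_contra hm
        have hmk : ¬ (m : ℕ) ≤ (k : ℕ) := fun h => hm (by rwa [Fin.le_def])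
        have hmu : (A ++ [l]).length ≤ (m : ℕ) := by rw [hAl]; omega
        have hπm := perm_apply π _ hπ m (by rw [hlen]; exact m.is_lt)
        have hmem : π m ∈ C := by
          rw [hπm, List.getElem_of_eq hL2, List.getElem_append_right hmu]
          exact List.getElem_mem _
        have : π m ∈ S := by
          rw [← hSeq]; exact Finset.mem_Iic.mpr hπmk
        exact hnotS _ hmem this

end LawlerAux

open LawlerAux

/-- Lawler's decomposition theorem: if jobs are indexed in EDD
order (non-decreasing due dates, ties broken by non-decreasing processing
times) and `l` is a job of maximal processing time, then there exist a position
`k` with `l ≤ k` and an optimal permutation `π*` such that `l` is scheduled at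
position `k` and the first `k` positions are occupied exactly by the jobs
`{1,…,k}` (so `l` is preceded exactly by the jobs `j ≤ k`, `j ≠ l`, and
followed by all jobs `j > k`). -/
theorem lawler_decomposition (n : ℕ) (p d : Fin n → ℤ)
    (hp : ∀ j, 0 < p j) (hd : ∀ j, 0 ≤ d j)
    (hEDD : Monotone d)
    (hties : ∀ i j : Fin n, i ≤ j → d i = d j → p i ≤ p j)
    (l : Fin n) (hl : ∀ i, p i ≤ p l) :
    ∃ k : Fin n, l ≤ k ∧
      ∃ π' : Equiv.Perm (Fin n),
        (∀ σ : Equiv.Perm (Fin n), totalTard p d π' ≤ totalTard p d σ) ∧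
        π' k = l ∧
        (∀ m : Fin n, m ≤ k ↔ π' m ≤ k) := by
  classical
  obtain ⟨σmin, -, hmin⟩ := Finset.exists_min_image (Finset.univ : Finset (Equiv.Perm (Fin n)))
    (totalTard p d) ⟨1, Finset.mem_univ 1⟩
  set T := totalTard p d σmin with hTdef
  have hT : ∀ σ, T ≤ totalTard p d σ := fun σ => hmin σ (Finset.mem_univ σ)
  set O : Finset (Equiv.Perm (Fin n)) :=
    Finset.univ.filter (fun σ => totalTard p d σ ≤ T) with hOdef
  obtain ⟨σ0, hσ0O, hmax⟩ := Finset.exists_max_image O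
    (fun σ => ((σ.symm l : Fin n) : ℕ)) ⟨σmin, by simp [hOdef]; exact le_rfl⟩
  have hσ0 : totalTard p d σ0 ≤ T := by
    rw [hOdef] at hσ0O
    exact (Finset.mem_filter.mp hσ0O).2
  have hlen0 : (List.ofFn ⇑σ0).length = n := List.length_ofFn
  have hnd0 : (List.ofFn ⇑σ0).Nodup := List.nodup_ofFn.mpr σ0.injective
  set u : ℕ := ((σ0.symm l : Fin n) : ℕ) with hu
  have hun : u < n := (σ0.symm l).is_lt
  set A := (List.ofFn ⇑σ0).take u with hAdef
  set C := (List.ofFn ⇑σ0).drop (u + 1) with hCdef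
  have hgetu : (List.ofFn ⇑σ0)[u]'(by rw [hlen0]; exact hun) = l := by
    rw [List.getElem_ofFn]
    exact (congrArg σ0 (Fin.ext rfl)).trans (σ0.apply_symm_apply l)
  have hdecomp : List.ofFn ⇑σ0 = A ++ l :: C := by
    conv_lhs => rw [← List.take_append_drop u (List.ofFn ⇑σ0)]
    rw [hAdef, hCdef]
    congr 1
    rw [List.drop_eq_getElem_cons (by rw [hlen0]; exact hun)]
    rw [hgetu]
  have hAu : A.length = u := by
    rw [hAdef, List.length_take]; omega
  have claim1 : ∀ j ∈ C, d l < d j ∧ max (sumP p A + p l) (d l) ≤ d j := by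
    intro j hjC
    by_contra hcon
    have hd' : d j = d l ∨ d j < max (sumP p A + p l) (d l) := by
      rcases not_and_or.mp hcon with h | h
      · push_neg at h
        rcases eq_or_lt_of_le h with h | h
        · exact Or.inl h
        · exact Or.inr (lt_of_lt_of_le h (le_max_right _ _))
      · push_neg at h
        exact Or.inr h
    obtain ⟨B, C2, hBC⟩ := List.append_of_mem hjC
    have hLdec : List.ofFn ⇑σ0 = A ++ l :: (B ++ j :: C2) := by rw [hdecomp, hBC]
    have hswap : tardFrom p d 0 (A ++ j :: (B ++ l :: C2)) ≤
        tardFrom p d 0 (List.ofFn ⇑σ0) := by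
      rw [hLdec]
      exact swap_le p d hp l j A B C2 (hl j) hd'
    have hperm2 : (j :: (B ++ l :: C2)).Perm (l :: (B ++ j :: C2)) := by
      refine (List.Perm.cons j List.perm_middle).trans ?_
      refine (List.Perm.swap l j (B ++ C2)).trans ?_
      exact List.Perm.cons l List.perm_middle.symm
    have hperm : (A ++ j :: (B ++ l :: C2)).Perm (List.ofFn ⇑σ0) := by
      rw [hLdec]
      exact List.Perm.append_left A hperm2
    obtain ⟨π', hπ'⟩ := exists_perm_ofFn _ (hperm.length_eq.trans hlen0)
      (hperm.nodup_iff.mpr hnd0)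
    have hπ'O : π' ∈ O := by
      rw [hOdef, Finset.mem_filter]
      refine ⟨Finset.mem_univ _, ?_⟩
      rw [totalTard_eq, hπ']
      have heq0 : tardFrom p d 0 (List.ofFn ⇑σ0) = totalTard p d σ0 :=
        (totalTard_eq p d σ0).symm
      linarith
    have hm'len : (A ++ j :: (B ++ l :: C2)).length = n := hperm.length_eq.trans hlen0
    have hlensum : A.length + (B.length + (C2.length + 1) + 1) = n := by
      simpa [List.length_append] using hm'len
    have hm'n : (A ++ j :: B).length < n := by
      simp only [List.length_append, List.length_cons]
      omega
    have heq2 : A ++ j :: (B ++ l :: C2) = (A ++ j :: B) ++ l :: C2 := by simp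
    have hl' : π' ⟨(A ++ j :: B).length, hm'n⟩ = l := by
      rw [perm_apply π' _ hπ' _ (by rw [hm'len]; exact hm'n)]
      rw [List.getElem_of_eq heq2]
      exact getElem_mid _ _ _ (by simp)
    have hsymm : ((π'.symm l : Fin n) : ℕ) = (A ++ j :: B).length := by
      have h2 : π'.symm l = ⟨(A ++ j :: B).length, hm'n⟩ := by
        rw [Equiv.symm_apply_eq]; exact hl'.symm
      rw [h2]
    have hle : ((π'.symm l : Fin n) : ℕ) ≤ ((σ0.symm l : Fin n) : ℕ) := hmax π' hπ'O
    rw [hsymm] at hle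
    simp only [List.length_append, List.length_cons] at hle
    omega
  have hstart : tardFrom p d 0 (A ++ l :: C) ≤ T := by
    rw [← hdecomp]
    have hheq : tardFrom p d 0 (List.ofFn ⇑σ0) = totalTard p d σ0 :=
      (totalTard_eq p d σ0).symm
    linarith
  exact step2 p d hp hEDD l T (max (sumP p A + p l) (d l)) hT u A C hAu
    (by rw [← hdecomp]; exact hlen0) (by rw [← hdecomp]; exact hnd0)
    hstart claim1 (le_max_left _ _)
end
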